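/- Let n, r, d be positive integers with 1 ≤ d ≤ r and n ≥ 2r − 1, let k = ⌊(n−r)/d⌋ + 1, and consider the 1D patch-and-stride structure P₁,…,P_k ∈ {0,1}^{r×n} with (Pᵢ)_{a,b} = 1 if and only if b = (i−1)·d + a, and P = Σ_{i,j=1}^k PᵢPⱼᵀ. Let p = ⌊(r−1)/d⌋ and p₂ = ⌊p/2⌋. Then the maximum eigenvalue of P satisfies λ_max(P) ≤ k·(p+1) − (p − p₂)·(p₂ + 1). -/

import Mathlib

open Matrix Finset
open scoped Kronecker

noncomputable section

/-- The `i`-th selection matrix of the 1D patch-and-stride structure with image size `n`,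
patch size `r` and stride `d` (0-based indices): `(Pᵢ)_{a,b} = 1` iff `b = i·d + a`. -/
def patch1D (n r d : ℕ) (i : Fin ((n - r) / d + 1)) : Matrix (Fin r) (Fin n) ℝ :=
  Matrix.of fun a b => if (b : ℕ) = i.1 * d + a.1 then 1 else 0

/-- The 1D patch matrix `P = ∑_{i,j} Pᵢ Pⱼᵀ`. -/
def patchMat1D (n r d : ℕ) : Matrix (Fin r) (Fin r) ℝ :=
  ∑ i, ∑ j, patch1D n r d i * (patch1D n r d j)ᵀ

/-- The row-major index bijection `{0,…,m−1} × {0,…,n−1} → {0,…,mn−1}`. -/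
def rowMajor (m n : ℕ) (x : Fin m × Fin n) : Fin (m * n) :=
  ⟨x.1.1 * n + x.2.1, by
    have h1 : x.1.1 * n + x.2.1 < x.1.1 * n + n := Nat.add_lt_add_left x.2.2 _
    have h2 : x.1.1 * n + n = (x.1.1 + 1) * n := (Nat.succ_mul _ _).symm
    have h3 : (x.1.1 + 1) * n ≤ m * n := Nat.mul_le_mul_right _ x.1.2
    exact lt_of_lt_of_le (h2 ▸ h1) h3⟩

/-- The `(i,j)`-th selection matrix of the 2D patch-and-stride structure with image size
`n₁ × n₂`, patch size `r₁ × r₂` and strides `d₁, d₂`, acting on row-major vectorized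
images (0-based indices): `(Q_{(i,j)})_{a,b} = 1` iff `a = p·r₂ + q` and
`b = (i·d₁ + p)·n₂ + j·d₂ + q` for some `0 ≤ p < r₁`, `0 ≤ q < r₂`. -/
def patch2D (n₁ n₂ r₁ r₂ d₁ d₂ : ℕ)
    (i : Fin ((n₁ - r₁) / d₁ + 1)) (j : Fin ((n₂ - r₂) / d₂ + 1)) :
    Matrix (Fin (r₁ * r₂)) (Fin (n₁ * n₂)) ℝ :=
  Matrix.of fun a b =>
    if ∃ p : Fin r₁, ∃ q : Fin r₂, (a : ℕ) = p.1 * r₂ + q.1 ∧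
        (b : ℕ) = (i.1 * d₁ + p.1) * n₂ + j.1 * d₂ + q.1 then 1 else 0

/-- The 2D patch matrix `Q = ∑_{i,p} ∑_{j,q} Q_{(i,j)} Q_{(p,q)}ᵀ`. -/
def patchMat2D (n₁ n₂ r₁ r₂ d₁ d₂ : ℕ) : Matrix (Fin (r₁ * r₂)) (Fin (r₁ * r₂)) ℝ :=
  ∑ i, ∑ p, ∑ j, ∑ q,
    patch2D n₁ n₂ r₁ r₂ d₁ d₂ i j * (patch2D n₁ n₂ r₁ r₂ d₁ d₂ p q)ᵀ

/-- Maximum eigenvalue of a Hermitian (real symmetric) matrix. -/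
def lamMax {m : ℕ} (A : Matrix (Fin m) (Fin m) ℝ) (hA : A.IsHermitian) : ℝ :=
  ⨆ i, hA.eigenvalues i

/-- Minimum eigenvalue of a Hermitian (real symmetric) matrix. -/
def lamMin {m : ℕ} (A : Matrix (Fin m) (Fin m) ℝ) (hA : A.IsHermitian) : ℝ :=
  ⨅ i, hA.eigenvalues i

/-- For the 1D patch-and-stride structure with `1 ≤ d ≤ r`,
`n ≥ 2r − 1`, `k = ⌊(n−r)/d⌋ + 1`, `p = ⌊(r−1)/d⌋` and `p₂ = ⌊p/2⌋`, the maximum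
eigenvalue of `P = ∑_{i,j} Pᵢ Pⱼᵀ` satisfies `λ_max(P) ≤ k·(p+1) − (p − p₂)·(p₂+1)`. -/
-- indicator sum over Fin n
lemma aux13_sum_fin_eq (k c : ℕ) : (∑ i : Fin k, (if i.1 = c then (1:ℝ) else 0))
    = if c < k then 1 else 0 := by
  by_cases h : c < k
  · rw [if_pos h]
    rw [Finset.sum_congr rfl (fun i _ => show _ = (if i = (⟨c,h⟩ : Fin k) then (1:ℝ) else 0) by
      congr 1; rw [Fin.ext_iff])]
    simp
  · rw [if_neg h]
    apply Finset.sum_eq_zero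
    intro i _
    rw [if_neg (by omega)]

lemma aux13_sum_ind (n x y : ℕ) (hx : x < n) :
    (∑ c : Fin n, (if (c:ℕ) = x then (1:ℝ) else 0) * (if (c:ℕ) = y then (1:ℝ) else 0))
    = if x = y then 1 else 0 := by
  rcases eq_or_ne x y with h | h
  · subst h
    rw [if_pos rfl]
    rw [Finset.sum_congr rfl (fun c _ => show _ = (if c.1 = x then (1:ℝ) else 0) by
      split <;> simp_all)]
    rw [aux13_sum_fin_eq, if_pos hx]
  · rw [if_neg h]
    apply Finset.sum_eq_zero
    intro c _
    by_cases h1 : (c:ℕ) = x <;> by_cases h2 : (c:ℕ) = y <;> simp [h1, h2] <;> omega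

lemma aux13_entry_eq (n r d : ℕ) (hrn : r ≤ n) (a b : Fin r) :
    patchMat1D n r d a b
    = ∑ i : Fin ((n-r)/d + 1), ∑ j : Fin ((n-r)/d + 1),
        (if i.1 * d + a.1 = j.1 * d + b.1 then (1:ℝ) else 0) := by
  unfold patchMat1D
  rw [Matrix.sum_apply, Finset.sum_congr rfl (fun i _ => Matrix.sum_apply _ _ _ _)]
  refine Finset.sum_congr rfl (fun i _ => Finset.sum_congr rfl (fun j _ => ?_))
  have hx : i.1 * d + a.1 < n := by
    have h1 : i.1 ≤ (n - r) / d := by omega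
    have h2 : i.1 * d ≤ ((n - r) / d) * d := Nat.mul_le_mul_right d h1
    have h3 : ((n - r) / d) * d ≤ n - r := Nat.div_mul_le_self _ _
    have h4 : a.1 < r := a.2
    omega
  rw [Matrix.mul_apply]
  simp only [patch1D, Matrix.transpose_apply, Matrix.of_apply]
  exact aux13_sum_ind n _ _ hx

lemma aux13_entry_nonneg (n r d : ℕ) (hrn : r ≤ n) (a b : Fin r) :
    0 ≤ patchMat1D n r d a b := by
  rw [aux13_entry_eq n r d hrn]
  apply Finset.sum_nonneg; intro i _
  apply Finset.sum_nonneg; intro j _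
  split <;> norm_num

lemma aux13_gauss (N : ℕ) : ∑ t ∈ Finset.range N, (t:ℝ) = N * (N-1) / 2 := by
  induction N with
  | zero => simp
  | succ n ih => rw [Finset.sum_range_succ, ih]; push_cast; ring

lemma aux13_cnt (k t : ℕ) :
    (∑ j : Fin k, ∑ i : Fin k, (if i.1 = j.1 + t then (1:ℝ) else 0)) = ((k - t : ℕ) : ℝ) := by
  rw [Finset.sum_congr rfl (fun j _ => aux13_sum_fin_eq k (j.1 + t))]
  rw [Fin.sum_univ_eq_sum_range (fun j => if j + t < k then (1:ℝ) else 0)]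
  rw [Finset.sum_congr rfl (fun j hj => by
    simp only [Finset.mem_range] at hj
    show (if j + t < k then (1:ℝ) else 0) = (if j < k - t then (1:ℝ) else 0)
    congr 1; simp; omega)]
  rw [Finset.sum_boole]
  congr 1
  rw [show (Finset.range k).filter (fun j => j < k - t) = Finset.range (k-t) by
    ext x; simp; omega]
  simp

lemma aux13_consec (a b : ℕ) : (0:ℝ) ≤ ((a:ℝ) - b) * ((a:ℝ) - b - 1) := by
  rcases le_or_gt a b with h | h
  · have h' : (a:ℝ) ≤ b := by exact_mod_cast h
    nlinarith
  · have h' : (b:ℝ) + 1 ≤ a := by exact_mod_cast h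
    nlinarith

lemma aux13_keyineq (l m p p₂ k : ℕ) (hlm : l + m ≤ p) (hk : p + 1 ≤ k) (hp2 : p₂ = p / 2) :
    ((l:ℝ)+1)*k - (l+1)*l/2 + (m*k - m*(m+1)/2) ≤ (k:ℝ)*(p+1) - ((p:ℝ) - p₂)*(p₂+1) := by
  have he : p = 2*p₂ ∨ p = 2*p₂ + 1 := by omega
  have hlm' : (l:ℝ) + m ≤ p := by exact_mod_cast hlm
  have hk' : (p:ℝ) + 1 ≤ k := by exact_mod_cast hk
  have hδ : (0:ℝ) ≤ (p:ℝ) - l - m := by linarith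
  have hkd : (0:ℝ) ≤ ((k:ℝ) - (p+1)) * ((p:ℝ) - l - m) := mul_nonneg (by linarith) hδ
  have hpd : (0:ℝ) ≤ (p₂:ℝ) * ((p:ℝ) - l - m) := mul_nonneg (Nat.cast_nonneg _) hδ
  have hw1 := aux13_consec l p₂
  have hw2 := aux13_consec m p₂
  rcases he with he | he
  · have he' : (p:ℝ) = 2*p₂ := by exact_mod_cast he
    nlinarith [mul_self_nonneg ((l:ℝ) - p₂), mul_self_nonneg ((m:ℝ) - p₂)]
  · have he' : (p:ℝ) = 2*(p₂:ℝ) + 1 := by exact_mod_cast he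
    nlinarith

lemma aux13_pair_bound (r d k : ℕ) (hd : 1 ≤ d) (a : Fin r) (i j : Fin k) :
    (∑ b : Fin r, (if i.1 * d + a.1 = j.1 * d + b.1 then (1:ℝ) else 0))
    ≤ (∑ t ∈ Finset.range ((r - 1 - a.1)/d + 1), (if i.1 = j.1 + t then (1:ℝ) else 0))
      + (∑ s ∈ Finset.range (a.1/d), (if j.1 = i.1 + s + 1 then (1:ℝ) else 0)) := by
  have hRnn : ∀ (N : ℕ) (f : ℕ → Prop) [DecidablePred f],
      (0:ℝ) ≤ ∑ t ∈ Finset.range N, (if f t then (1:ℝ) else 0) := by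
    intro N f _
    apply Finset.sum_nonneg; intro t _; split <;> norm_num
  by_cases hc : ∃ b : Fin r, i.1 * d + a.1 = j.1 * d + b.1
  · obtain ⟨b₀, hb₀⟩ := hc
    have hL : (∑ b : Fin r, (if i.1 * d + a.1 = j.1 * d + b.1 then (1:ℝ) else 0)) = 1 := by
      rw [Finset.sum_congr rfl (fun b _ =>
        if_congr (show (i.1*d+a.1 = j.1*d+b.1) ↔ b = b₀ by rw [Fin.ext_iff]; omega) rfl rfl)]
      simp
    rw [hL]
    rcases le_or_gt j.1 i.1 with hji | hij
    · -- t = i - j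
      have hT : j.1 * d + (i.1 - j.1) * d = i.1 * d := by
        rw [← Nat.add_mul, Nat.add_sub_cancel' hji]
      have htd : (i.1 - j.1) * d + a.1 = b₀.1 := by omega
      have htl : i.1 - j.1 ≤ (r - 1 - a.1) / d := by
        rw [Nat.le_div_iff_mul_le (by omega : 0 < d)]
        have := b₀.2
        omega
      have h1 : (1:ℝ) ≤ ∑ t ∈ Finset.range ((r - 1 - a.1)/d + 1),
          (if i.1 = j.1 + t then (1:ℝ) else 0) :=
        calc (1:ℝ) = (if i.1 = j.1 + (i.1 - j.1) then (1:ℝ) else 0) := by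
              rw [if_pos (by omega)]
        _ ≤ _ := Finset.single_le_sum
            (f := fun t => if i.1 = j.1 + t then (1:ℝ) else 0)
            (fun t _ => by split <;> norm_num)
            (Finset.mem_range.mpr (Nat.lt_succ_of_le htl))
      have h2 := hRnn (a.1/d) (fun s => j.1 = i.1 + s + 1)
      linarith
    · -- s = j - i - 1
      have hT : i.1 * d + (j.1 - i.1) * d = j.1 * d := by
        rw [← Nat.add_mul, Nat.add_sub_cancel' (le_of_lt hij)]
      have htd : (j.1 - i.1) * d + b₀.1 = a.1 := by omega
      have hts : j.1 - i.1 ≤ a.1 / d := by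
        rw [Nat.le_div_iff_mul_le (by omega : 0 < d)]
        omega
      have h1 : (1:ℝ) ≤ ∑ s ∈ Finset.range (a.1/d),
          (if j.1 = i.1 + s + 1 then (1:ℝ) else 0) :=
        calc (1:ℝ) = (if j.1 = i.1 + (j.1 - i.1 - 1) + 1 then (1:ℝ) else 0) := by
              rw [if_pos (by omega)]
        _ ≤ _ := Finset.single_le_sum
            (f := fun s => if j.1 = i.1 + s + 1 then (1:ℝ) else 0)
            (fun s _ => by split <;> norm_num)
            (Finset.mem_range.mpr (by omega : j.1 - i.1 - 1 < a.1/d))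
      have h2 := hRnn ((r - 1 - a.1)/d + 1) (fun t => i.1 = j.1 + t)
      linarith
  · push_neg at hc
    have hL : (∑ b : Fin r, (if i.1 * d + a.1 = j.1 * d + b.1 then (1:ℝ) else 0)) = 0 := by
      apply Finset.sum_eq_zero
      intro b _
      rw [if_neg (hc b)]
    rw [hL]
    have h1 := hRnn ((r - 1 - a.1)/d + 1) (fun t => i.1 = j.1 + t)
    have h2 := hRnn (a.1/d) (fun s => j.1 = i.1 + s + 1)
    linarith

lemma aux13_rowsum_bound (n r d : ℕ) (hd : 1 ≤ d) (hdr : d ≤ r) (hrn : r ≤ n) (hn : 2 * r - 1 ≤ n)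
    (a : Fin r) :
    (∑ b : Fin r, patchMat1D n r d a b)
      ≤ (((n - r) / d + 1 : ℕ) : ℝ) * (((r - 1) / d : ℕ) + 1)
        - ((((r - 1) / d : ℕ) : ℝ) - (((r - 1) / d / 2 : ℕ) : ℝ))
            * ((((r - 1) / d / 2 : ℕ) : ℝ) + 1) := by
  set k := (n - r) / d + 1 with hk
  set p := (r - 1) / d with hp
  set p₂ := (r - 1) / d / 2 with hp₂
  set l := (r - 1 - a.1) / d with hl
  set m := a.1 / d with hm
  have hlp : l ≤ p := Nat.div_le_div_right (by omega)
  have hmp : m ≤ p := Nat.div_le_div_right (by omega)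
  have hlm : l + m ≤ p := by
    rw [hp, Nat.le_div_iff_mul_le (by omega : 0 < d), Nat.add_mul]
    have h1 : l * d ≤ r - 1 - a.1 := Nat.div_mul_le_self _ _
    have h2 : m * d ≤ a.1 := Nat.div_mul_le_self _ _
    have h3 := a.2
    omega
  have hpk : p + 1 ≤ k := by
    have : p ≤ (n - r) / d := Nat.div_le_div_right (by omega)
    omega
  -- step 1: rewrite entries and swap sums
  have step1 : (∑ b : Fin r, patchMat1D n r d a b)
      = ∑ i : Fin k, ∑ j : Fin k, ∑ b : Fin r,
          (if i.1 * d + a.1 = j.1 * d + b.1 then (1:ℝ) else 0) := by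
    rw [Finset.sum_congr rfl (fun b _ => aux13_entry_eq n r d hrn a b)]
    rw [Finset.sum_comm]
    exact Finset.sum_congr rfl (fun i _ => Finset.sum_comm)
  rw [step1]
  -- step 2: apply the pairwise bound
  have step2 : (∑ i : Fin k, ∑ j : Fin k, ∑ b : Fin r,
          (if i.1 * d + a.1 = j.1 * d + b.1 then (1:ℝ) else 0))
      ≤ ∑ i : Fin k, ∑ j : Fin k,
          ((∑ t ∈ Finset.range (l + 1), (if i.1 = j.1 + t then (1:ℝ) else 0))
            + (∑ s ∈ Finset.range m, (if j.1 = i.1 + s + 1 then (1:ℝ) else 0))) :=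
    Finset.sum_le_sum (fun i _ => Finset.sum_le_sum (fun j _ => aux13_pair_bound r d k hd a i j))
  refine le_trans step2 ?_
  -- step 3: evaluate the double counting sums
  have count1 : (∑ i : Fin k, ∑ j : Fin k, ∑ t ∈ Finset.range (l + 1),
        (if i.1 = j.1 + t then (1:ℝ) else 0))
      = ∑ t ∈ Finset.range (l + 1), ((k - t : ℕ) : ℝ) := by
    rw [Finset.sum_congr rfl (fun i _ => Finset.sum_comm), Finset.sum_comm]
    exact Finset.sum_congr rfl (fun t _ => (Finset.sum_comm).trans (aux13_cnt k t))
  have count2 : (∑ i : Fin k, ∑ j : Fin k, ∑ s ∈ Finset.range m,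
        (if j.1 = i.1 + s + 1 then (1:ℝ) else 0))
      = ∑ s ∈ Finset.range m, ((k - (s + 1) : ℕ) : ℝ) := by
    rw [Finset.sum_congr rfl (fun i _ => Finset.sum_comm), Finset.sum_comm]
    refine Finset.sum_congr rfl (fun s _ => ?_)
    rw [Finset.sum_congr rfl (fun i _ => Finset.sum_congr rfl (fun j _ =>
      if_congr (show (j.1 = i.1 + s + 1) ↔ (j.1 = i.1 + (s+1)) from by omega) rfl rfl))]
    exact aux13_cnt k (s + 1)
  rw [Finset.sum_congr rfl (fun i _ => Finset.sum_add_distrib), Finset.sum_add_distrib,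
    count1, count2]
  -- step 4: evaluate the arithmetic sums
  have ev1 : (∑ t ∈ Finset.range (l + 1), ((k - t : ℕ) : ℝ))
      = ((l:ℝ) + 1) * k - ((l:ℝ) + 1) * l / 2 := by
    rw [Finset.sum_congr rfl (fun t ht => by
      rw [Nat.cast_sub (by simp only [Finset.mem_range] at ht; omega)])]
    rw [Finset.sum_sub_distrib, aux13_gauss]
    simp only [Finset.sum_const, Finset.card_range, nsmul_eq_mul]
    push_cast
    ring
  have ev2 : (∑ s ∈ Finset.range m, ((k - (s + 1) : ℕ) : ℝ))
      = (m:ℝ) * k - (m:ℝ) * (m + 1) / 2 := by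
    rw [Finset.sum_congr rfl (fun s hs => by
      rw [Nat.cast_sub (by simp only [Finset.mem_range] at hs; omega)])]
    push_cast
    simp only [Finset.sum_sub_distrib, Finset.sum_add_distrib, Finset.sum_const,
      Finset.card_range, nsmul_eq_mul, aux13_gauss]
    push_cast
    ring
  rw [ev1, ev2]
  exact aux13_keyineq l m p p₂ k hlm hpk rfl

theorem stmt13 (n r d : ℕ) (hd : 1 ≤ d) (hdr : d ≤ r) (hrn : r ≤ n) (hn : 2 * r - 1 ≤ n)
    (hP : (patchMat1D n r d).IsHermitian) :
    lamMax (patchMat1D n r d) hP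
      ≤ (((n - r) / d + 1 : ℕ) : ℝ) * (((r - 1) / d : ℕ) + 1)
        - ((((r - 1) / d : ℕ) : ℝ) - (((r - 1) / d / 2 : ℕ) : ℝ))
            * ((((r - 1) / d / 2 : ℕ) : ℝ) + 1) := by
  haveI : Nonempty (Fin r) := ⟨⟨0, by omega⟩⟩
  obtain ⟨i₀, hi₀⟩ := exists_eq_ciSup_of_finite (f := hP.eigenvalues)
  have hlam : lamMax (patchMat1D n r d) hP = hP.eigenvalues i₀ := hi₀.symm
  have hev : Module.End.HasEigenvalue (Matrix.toLin' (patchMat1D n r d))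
      (hP.eigenvalues i₀) := by
    have hv := hP.mulVec_eigenvectorBasis i₀
    apply Module.End.hasEigenvalue_of_hasEigenvector
      (x := ⇑(hP.eigenvectorBasis i₀))
    constructor
    · rw [Module.End.mem_eigenspace_iff, Matrix.toLin'_apply, hv]
    · exact fun h => (hP.eigenvectorBasis.toBasis.ne_zero i₀)
        (by ext j; exact congrFun h j)
  obtain ⟨a, ha⟩ := eigenvalue_mem_ball hev
  rw [Metric.mem_closedBall, Real.dist_eq] at ha
  have h1 : hP.eigenvalues i₀ ≤ patchMat1D n r d a a
      + ∑ b ∈ Finset.univ.erase a, ‖patchMat1D n r d a b‖ := by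
    have := abs_le.mp ha
    linarith [this.2]
  have h2 : (∑ b ∈ Finset.univ.erase a, ‖patchMat1D n r d a b‖)
      = ∑ b ∈ Finset.univ.erase a, patchMat1D n r d a b :=
    Finset.sum_congr rfl (fun b _ => by
      rw [Real.norm_eq_abs, abs_of_nonneg (aux13_entry_nonneg n r d hrn a b)])
  have h3 : patchMat1D n r d a a + ∑ b ∈ Finset.univ.erase a, patchMat1D n r d a b
      = ∑ b : Fin r, patchMat1D n r d a b :=
    Finset.add_sum_erase _ _ (Finset.mem_univ a)
  rw [hlam]
  calc hP.eigenvalues i₀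
      ≤ ∑ b : Fin r, patchMat1D n r d a b := by rw [← h3, ← h2]; exact h1
    _ ≤ _ := aux13_rowsum_bound n r d hd hdr hrn hn a
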